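/- Let k ≥ 2 and let A be a symmetric matrix with eigenvalues in Γ_k^+. If σ_k(A) ≥ c_1 > 0 and σ_{k-1}(A) ≤ c_2, then there exists C = C(c_1, c_2, n, k) such that every eigenvalue λ of A satisfies |λ| ≤ C. -/

import Mathlib

open Finset Matrix

/-- The `k`-th elementary symmetric function of a vector in `ℝⁿ`. -/
noncomputable def esymmVec (n k : ℕ) (x : Fin n → ℝ) : ℝ :=
  ∑ s ∈ Finset.univ.powersetCard k, ∏ i ∈ s, x i

/-- `σ_k(A)`: the `k`-th elementary symmetric function of the eigenvalues of a
symmetric (Hermitian) real matrix `A`. -/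
noncomputable def sigmaM (n k : ℕ) (A : Matrix (Fin n) (Fin n) ℝ) : ℝ :=
  if h : A.IsHermitian then esymmVec n k h.eigenvalues else 0

/-- The `q`-th Newton transformation
`T_q(A) = σ_q(A)·I − σ_{q−1}(A)·A + ⋯ + (−1)^q A^q`. -/
noncomputable def newtonT (n q : ℕ) (A : Matrix (Fin n) (Fin n) ℝ) :
    Matrix (Fin n) (Fin n) ℝ :=
  ∑ j ∈ Finset.range (q + 1), ((-1 : ℝ) ^ j * sigmaM n (q - j) A) • A ^ j

/-- The Gårding cone `Γ_k^+`: the connected component of `{σ_k > 0}` in `ℝⁿ`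
containing the positive cone (represented by the point `(1,…,1)`). -/
noncomputable def GammaPlus (n k : ℕ) : Set (Fin n → ℝ) :=
  connectedComponentIn {x | 0 < esymmVec n k x} (fun _ => 1)

/-! ### Auxiliary material -/

namespace EigenBoundAux

open Polynomial

/-! #### Basic facts about `esymmVec` -/

lemma esymmVec_continuous (n j : ℕ) : Continuous (esymmVec n j) := by
  unfold esymmVec
  exact continuous_finset_sum _ fun s _ =>
    continuous_finset_prod _ fun i _ => continuous_apply i

lemma esymmVec_zero (n : ℕ) (x : Fin n → ℝ) : esymmVec n 0 x = 1 := by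
  simp [esymmVec]

lemma esymmVec_ones (n j : ℕ) : esymmVec n j (fun _ => 1) = (n.choose j : ℝ) := by
  simp [esymmVec, Finset.card_powersetCard]

lemma esymmVec_one (n : ℕ) (x : Fin n → ℝ) : esymmVec n 1 x = ∑ i, x i := by
  rw [esymmVec, Finset.powersetCard_one, Finset.sum_map]
  simp

/-! #### The polynomial `∏ (X + xᵢ)` and its iterated derivatives -/

/-- The monic polynomial with roots `-xᵢ`. -/
noncomputable def Pp (n : ℕ) (x : Fin n → ℝ) : Polynomial ℝ := ∏ i : Fin n, (X + C (x i))

lemma natDegree_Pp (n : ℕ) (x : Fin n → ℝ) : (Pp n x).natDegree = n := by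
  rw [Pp, natDegree_prod_of_monic _ _ fun i _ => monic_X_add_C _]
  simp [natDegree_X_add_C]

lemma coeff_Pp (n : ℕ) (x : Fin n → ℝ) {j : ℕ} (hj : j ≤ n) :
    (Pp n x).coeff j = esymmVec n (n - j) x := by
  rw [Pp, Finset.prod_X_add_C_coeff _ _ (by simpa using hj)]
  simp [esymmVec]

lemma splits_Pp (n : ℕ) (x : Fin n → ℝ) : Splits (Pp n x) :=
  Splits.prod fun _ _ => Splits.of_natDegree_le_one (by simp)

/-- Iterated derivatives of `Pp` keep splitting (by Rolle) and their degree drops by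
one at each step. -/
lemma iter_spec (n : ℕ) (x : Fin n → ℝ) :
    ∀ m, m ≤ n → Multiset.card ((derivative^[m] (Pp n x)).roots) = n - m ∧
      (derivative^[m] (Pp n x)).natDegree = n - m := by
  intro m
  induction m with
  | zero =>
    intro _
    refine ⟨?_, by simpa using natDegree_Pp n x⟩
    rw [Function.iterate_zero_apply, splits_iff_card_roots.mp (splits_Pp n x), natDegree_Pp]
    simp
  | succ m ih =>
    intro hm
    obtain ⟨hc, hd⟩ := ih (by omega)
    have e1 : derivative^[m+1] (Pp n x) = derivative (derivative^[m] (Pp n x)) :=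
      Function.iterate_succ_apply' _ _ _
    have h2 := card_roots_le_derivative (derivative^[m] (Pp n x))
    rw [← e1] at h2
    have hle : (derivative^[m+1] (Pp n x)).natDegree ≤ n - (m+1) := by
      have h3 := natDegree_iterate_derivative (Pp n x) (m+1)
      rwa [natDegree_Pp] at h3
    have hcard := card_roots' (derivative^[m+1] (Pp n x))
    exact ⟨by omega, by omega⟩

/-- A positive combinatorial factor (a descending factorial). -/
noncomputable def Df (n k i : ℕ) : ℝ := ((i + (n - k)).descFactorial (n - k) : ℝ)

lemma Df_pos (n k i : ℕ) : 0 < Df n k i := by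
  have h : (i + (n - k)).descFactorial (n - k) ≠ 0 := by
    rw [Ne, Nat.descFactorial_eq_zero_iff_lt]; omega
  have := Nat.pos_of_ne_zero h
  rw [Df]
  exact_mod_cast this

/-- `Qq n k x` is, up to a positive constant, `t ↦ σ_k(x + t·𝟙)`. -/
noncomputable def Qq (n k : ℕ) (x : Fin n → ℝ) : Polynomial ℝ := derivative^[n - k] (Pp n x)

variable {n k : ℕ}

lemma natDegree_Qq (hkn : k ≤ n) (x : Fin n → ℝ) : (Qq n k x).natDegree = k := by
  have := (iter_spec n x (n - k) (by omega)).2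
  rw [Qq, this]; omega

lemma splits_Qq (hkn : k ≤ n) (x : Fin n → ℝ) : Splits (Qq n k x) := by
  rw [splits_iff_card_roots, natDegree_Qq hkn, Qq, (iter_spec n x (n - k) (by omega)).1]
  omega

lemma card_roots_Qq (hkn : k ≤ n) (x : Fin n → ℝ) :
    Multiset.card (Qq n k x).roots = k := by
  rw [Qq, (iter_spec n x (n - k) (by omega)).1]; omega

lemma coeff_Qq (hkn : k ≤ n) (x : Fin n → ℝ) {j : ℕ} (hj : j ≤ k) :
    (Qq n k x).coeff j = Df n k j * esymmVec n (k - j) x := by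
  rw [Qq, coeff_iterate_derivative, coeff_Pp n x (by omega), nsmul_eq_mul, Df]
  congr 2
  omega

/-! #### Multiset lemmas -/

lemma mprod_pos {t : Multiset ℝ} (h : ∀ r ∈ t, (0:ℝ) < r) : 0 < t.prod := by
  induction t using Multiset.induction with
  | empty => simp
  | cons a s ih =>
    rw [Multiset.prod_cons]
    exact mul_pos (h a (Multiset.mem_cons_self a s))
      (ih fun r hr => h r (Multiset.mem_cons_of_mem hr))

lemma mprod_ge {t : Multiset ℝ} {c : ℝ} (hc : 0 < c) (h : ∀ r ∈ t, c ≤ r) :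
    c ^ Multiset.card t ≤ t.prod := by
  induction t using Multiset.induction with
  | empty => simp
  | cons a s ih =>
    rw [Multiset.prod_cons, Multiset.card_cons, pow_succ, mul_comm (c ^ _) c]
    have hs := ih fun r hr => h r (Multiset.mem_cons_of_mem hr)
    have ha := h a (Multiset.mem_cons_self a s)
    have : (0:ℝ) < c ^ Multiset.card s := pow_pos hc _
    nlinarith

lemma esymm_term_nonneg {μ t : Multiset ℝ} (hpos : ∀ r ∈ μ, (0:ℝ) < r)
    (ht : t ≤ μ) : 0 ≤ t.prod :=
  (mprod_pos fun r hr => hpos r (Multiset.mem_of_le ht hr)).le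

lemma term_le_esymm {μ t : Multiset ℝ} (hpos : ∀ r ∈ μ, (0:ℝ) < r) {j : ℕ}
    (ht : t ∈ Multiset.powersetCard j μ) : t.prod ≤ μ.esymm j := by
  refine Multiset.single_le_sum ?_ _ (Multiset.mem_map_of_mem _ ht)
  intro y hy
  obtain ⟨u, hu, rfl⟩ := Multiset.mem_map.mp hy
  exact esymm_term_nonneg hpos (Multiset.mem_powersetCard.mp hu).1

lemma esymm_pos {μ : Multiset ℝ} (hpos : ∀ r ∈ μ, (0:ℝ) < r) {j : ℕ}
    (hj : j ≤ Multiset.card μ) : 0 < μ.esymm j := by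
  have hcard : 0 < Multiset.card (Multiset.powersetCard j μ) := by
    rw [Multiset.card_powersetCard]
    exact Nat.choose_pos hj
  obtain ⟨t, ht⟩ := Multiset.card_pos_iff_exists_mem.mp hcard
  have h1 : 0 < t.prod := mprod_pos fun r hr =>
    hpos r (Multiset.mem_of_le (Multiset.mem_powersetCard.mp ht).1 hr)
  exact lt_of_lt_of_le h1 (term_le_esymm hpos ht)

lemma esymm_card (μ : Multiset ℝ) : μ.esymm (Multiset.card μ) = μ.prod := by
  have h1 : Multiset.powersetCard (Multiset.card μ) μ = {μ} := by
    have hc : Multiset.card (Multiset.powersetCard (Multiset.card μ) μ) = 1 := by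
      rw [Multiset.card_powersetCard, Nat.choose_self]
    obtain ⟨a, ha⟩ := Multiset.card_eq_one.mp hc
    have hμ : μ ∈ Multiset.powersetCard (Multiset.card μ) μ :=
      Multiset.mem_powersetCard.mpr ⟨le_rfl, rfl⟩
    rw [ha] at hμ ⊢
    rw [Multiset.mem_singleton.mp hμ]
  rw [Multiset.esymm, h1]
  simp

lemma esymm_one (μ : Multiset ℝ) : μ.esymm 1 = μ.sum := by
  rw [Multiset.esymm, Multiset.powersetCard_one, Multiset.map_map]
  simp

/-! #### The master factorization lemma -/

/-- If `σ_k(x) > 0` and `σ_j(x) ≥ 0` for `1 ≤ j ≤ k`, then the Gårding polynomial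
`Qq n k x` has `k` (negated) roots, all positive, and its coefficients give the
relations `Df (k-j) σ_j(x) = Df k · e_j(μ)`. -/
lemma master (hk2 : 2 ≤ k) (hkn : k ≤ n) (x : Fin n → ℝ)
    (hpos : 0 < esymmVec n k x)
    (hnn : ∀ j, 1 ≤ j → j ≤ k → 0 ≤ esymmVec n j x) :
    ∃ μ : Multiset ℝ, Multiset.card μ = k ∧ (∀ r ∈ μ, 0 < r) ∧
      ∀ j, j ≤ k → Df n k (k - j) * esymmVec n j x = Df n k k * μ.esymm j := by
  set q := Qq n k x with hq
  have hdeg : q.natDegree = k := natDegree_Qq hkn x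
  have hq0 : q ≠ 0 := fun h => by simp [h, natDegree_zero] at hdeg; omega
  have hcoeff_nonneg : ∀ i, i ≤ k → 0 ≤ q.coeff i := by
    intro i hi
    rw [hq, coeff_Qq hkn x hi]
    rcases Nat.eq_or_lt_of_le hi with heq | hlt
    · rw [heq, Nat.sub_self]
      have h1 : esymmVec n 0 x = 1 := by simp [esymmVec]
      rw [h1, mul_one]
      exact (Df_pos n k k).le
    · exact mul_nonneg (Df_pos n k i).le (hnn (k - i) (by omega) (by omega))
  have hcoeff0 : 0 < q.coeff 0 := by
    rw [hq, coeff_Qq hkn x (Nat.zero_le k), Nat.sub_zero]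
    exact mul_pos (Df_pos n k 0) hpos
  -- all roots are negative
  have hroots_neg : ∀ r ∈ q.roots, r < 0 := by
    intro r hr
    have hroot : q.eval r = 0 := (Polynomial.mem_roots hq0).mp hr
    by_contra hge
    push_neg at hge
    have heval : 0 < q.eval r := by
      rw [Polynomial.eval_eq_sum_range]
      have : ∀ i ∈ Finset.range (q.natDegree + 1), 0 ≤ q.coeff i * r ^ i := by
        intro i hi
        rw [hdeg] at hi
        have hik := Finset.mem_range.mp hi
        exact mul_nonneg (hcoeff_nonneg i (by omega)) (pow_nonneg hge i)
      have h0mem : 0 ∈ Finset.range (q.natDegree + 1) := by simp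
      calc (0:ℝ) < q.coeff 0 * r ^ 0 := by simpa using hcoeff0
        _ ≤ ∑ i ∈ Finset.range (q.natDegree + 1), q.coeff i * r ^ i :=
          Finset.single_le_sum this h0mem
    rw [hroot] at heval; exact lt_irrefl 0 heval
  refine ⟨q.roots.map (fun r => -r), ?_, ?_, ?_⟩
  · rw [Multiset.card_map]; exact card_roots_Qq hkn x
  · intro r hr
    obtain ⟨a, ha, rfl⟩ := Multiset.mem_map.mp hr
    linarith [hroots_neg a ha]
  · intro j hj
    have hlead : q.leadingCoeff = Df n k k := by
      rw [← Polynomial.coeff_natDegree, hdeg, hq, coeff_Qq hkn x le_rfl, Nat.sub_self]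
      simp [esymmVec]
    have hfact := Polynomial.Splits.eq_prod_roots (splits_Qq hkn x)
    rw [← hq] at hfact
    have hmap : (Multiset.map (fun a => X - C a) q.roots)
        = Multiset.map (fun r => X + C r) (q.roots.map (fun r => -r)) := by
      rw [Multiset.map_map]
      exact Multiset.map_congr rfl fun r _ => by simp [sub_eq_add_neg]
    have hcards : Multiset.card (q.roots.map (fun r => -r)) = k := by
      rw [Multiset.card_map]; exact card_roots_Qq hkn x
    have hkj : k - (k - j) = j := by omega
    have hco := congrArg (fun p => Polynomial.coeff p (k - j)) hfact
    simp only [hmap] at hco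
    rw [Polynomial.coeff_C_mul,
      Multiset.prod_X_add_C_coeff _ (by rw [hcards]; omega)] at hco
    rw [hcards, hlead, hkj] at hco
    rw [hq, coeff_Qq hkn x (by omega : k - j ≤ k), hkj] at hco
    exact hco

/-- Key positivity: on the boundary situation, nonnegativity upgrades to positivity. -/
lemma boundary (hk2 : 2 ≤ k) (hkn : k ≤ n) (x : Fin n → ℝ)
    (hpos : 0 < esymmVec n k x)
    (hnn : ∀ j, 1 ≤ j → j ≤ k → 0 ≤ esymmVec n j x) :
    ∀ j, 1 ≤ j → j ≤ k → 0 < esymmVec n j x := by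
  obtain ⟨μ, hcard, hμpos, hid⟩ := master hk2 hkn x hpos hnn
  intro j h1 hjk
  have hid' := hid j hjk
  have h2 : 0 < Df n k k * μ.esymm j :=
    mul_pos (Df_pos n k k) (esymm_pos hμpos (by rw [hcard]; omega))
  rw [← hid'] at h2
  by_contra hcon
  push_neg at hcon
  have : Df n k (k - j) * esymmVec n j x ≤ 0 :=
    mul_nonpos_of_nonneg_of_nonpos (Df_pos n k (k - j)).le hcon
  linarith

/-- The Gårding cone is contained in `{σ_1 > 0, …, σ_k > 0}`. -/
lemma gamma_subset (hk2 : 2 ≤ k) (hkn : k ≤ n) :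
    GammaPlus n k ⊆ {x | ∀ j, 1 ≤ j → j ≤ k → 0 < esymmVec n j x} := by
  classical
  set U : Set (Fin n → ℝ) := {x | ∀ j, 1 ≤ j → j ≤ k → 0 < esymmVec n j x} with hU
  set V : Set (Fin n → ℝ) := ⋃ j ∈ Finset.Icc 1 k, {x | esymmVec n j x < 0} with hV
  have hUopen : IsOpen U := by
    have hrw : U = ⋂ j ∈ Finset.Icc 1 k, {x | 0 < esymmVec n j x} := by
      ext x
      simp only [hU, Set.mem_setOf_eq, Set.mem_iInter, Finset.mem_Icc]
      exact ⟨fun h j hj => h j hj.1 hj.2, fun h j h1 h2 => h j ⟨h1, h2⟩⟩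
    rw [hrw]
    exact isOpen_biInter_finset fun j _ =>
      isOpen_lt continuous_const (esymmVec_continuous n j)
  have hVopen : IsOpen V :=
    isOpen_biUnion fun j _ => isOpen_lt (esymmVec_continuous n j) continuous_const
  have hdisj : Disjoint U V := by
    rw [Set.disjoint_left]
    intro x hxU hxV
    simp only [hV, Set.mem_iUnion, Set.mem_setOf_eq, Finset.mem_Icc] at hxV
    obtain ⟨j, ⟨h1, h2⟩, hx⟩ := hxV
    exact absurd (hxU j h1 h2) (not_lt.mpr hx.le)
  have hsub : GammaPlus n k ⊆ U ∪ V := by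
    intro x hx
    have hxk : 0 < esymmVec n k x :=
      connectedComponentIn_subset {y : Fin n → ℝ | 0 < esymmVec n k y} (fun _ => 1) hx
    by_cases hxV : x ∈ V
    · exact Or.inr hxV
    · left
      have hnn : ∀ j, 1 ≤ j → j ≤ k → 0 ≤ esymmVec n j x := by
        intro j h1 h2
        by_contra hcon
        push_neg at hcon
        refine hxV ?_
        simp only [hV, Set.mem_iUnion, Set.mem_setOf_eq, Finset.mem_Icc]
        exact ⟨j, ⟨h1, h2⟩, hcon⟩
      exact boundary hk2 hkn x hxk hnn
  have h1S : (fun _ => (1:ℝ)) ∈ {x : Fin n → ℝ | 0 < esymmVec n k x} := by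
    simp only [Set.mem_setOf_eq, esymmVec_ones]
    exact_mod_cast Nat.choose_pos hkn
  have h1U : (fun _ => (1:ℝ)) ∈ U := by
    intro j _ h2
    rw [esymmVec_ones]
    exact_mod_cast Nat.choose_pos (le_trans h2 hkn)
  exact isPreconnected_connectedComponentIn.subset_left_of_subset_union hUopen hVopen
    hdisj hsub ⟨_, mem_connectedComponentIn h1S, h1U⟩

/-- The square of the sum versus the sum of squares and `e₂`. -/
lemma sq_sum_aux {ι : Type*} [DecidableEq ι] (s : Finset ι) (x : ι → ℝ) :
    (∑ i ∈ s, x i) ^ 2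
      = ∑ i ∈ s, x i ^ 2 + 2 * ∑ t ∈ s.powersetCard 2, ∏ i ∈ t, x i := by
  induction s using Finset.induction_on with
  | empty =>
    rw [Finset.powersetCard_eq_empty.mpr (by simp)]
    simp
  | insert a s ha ih =>
    have hps : (insert a s).powersetCard 2
        = s.powersetCard 2 ∪ (s.powersetCard 1).image (insert a) :=
      Finset.powersetCard_succ_insert ha 1
    have hdisj : Disjoint (s.powersetCard 2) ((s.powersetCard 1).image (insert a)) := by
      rw [Finset.disjoint_left]
      intro t ht ht'
      obtain ⟨u, hu, rfl⟩ := Finset.mem_image.mp ht'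
      have h1 := (Finset.mem_powersetCard.mp ht).1
      exact ha (h1 (Finset.mem_insert_self a u))
    have himg : ∑ t ∈ (s.powersetCard 1).image (insert a), ∏ i ∈ t, x i
        = x a * ∑ i ∈ s, x i := by
      rw [Finset.sum_image ?inj]
      case inj =>
        intro t1 h1 t2 h2 heq
        have ha1 : a ∉ t1 := fun h => ha ((Finset.mem_powersetCard.mp h1).1 h)
        have ha2 : a ∉ t2 := fun h => ha ((Finset.mem_powersetCard.mp h2).1 h)
        rw [← Finset.erase_insert ha1, ← Finset.erase_insert ha2, heq]
      rw [Finset.powersetCard_one, Finset.sum_map, Finset.mul_sum]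
      refine Finset.sum_congr rfl fun i hi => ?_
      have hai : a ∉ ({i} : Finset ι) := by
        simp only [Finset.mem_singleton]
        intro h; subst h; exact ha hi
      simp [Finset.prod_insert hai]
    rw [Finset.sum_insert ha, Finset.sum_insert ha, hps, Finset.sum_union hdisj, himg]
    linear_combination ih

end EigenBoundAux

set_option maxHeartbeats 1000000 in
open EigenBoundAux in
/-- If `A` is symmetric with eigenvalues in `Γ_k^+` (`k ≥ 2`), `σ_k(A) ≥ c₁ > 0`
and `σ_{k-1}(A) ≤ c₂`, then the eigenvalues of `A` are bounded by a constant
depending only on `c₁, c₂, n, k`. -/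
theorem eigenvalue_bound (n k : ℕ) (hk2 : 2 ≤ k) (hkn : k ≤ n)
    (c₁ c₂ : ℝ) (hc₁ : 0 < c₁) :
    ∃ C : ℝ, ∀ (A : Matrix (Fin n) (Fin n) ℝ) (hA : A.IsHermitian),
      hA.eigenvalues ∈ GammaPlus n k →
      c₁ ≤ sigmaM n k A → sigmaM n (k - 1) A ≤ c₂ →
      ∀ i, |hA.eigenvalues i| ≤ C := by
  classical
  set a : ℝ := Df n k 0 * c₁ / Df n k k with ha
  set b : ℝ := Df n k 1 * c₂ / Df n k k with hb
  set B : ℝ := b / (a / b) ^ (k - 2) with hB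
  refine ⟨Df n k k * (k * B) / Df n k (k - 1), ?_⟩
  intro A hA hGamma hσk hσk1 i
  set x := hA.eigenvalues with hx
  have hσk' : c₁ ≤ esymmVec n k x := by
    unfold sigmaM at hσk
    rwa [dif_pos hA] at hσk
  have hσk1' : esymmVec n (k - 1) x ≤ c₂ := by
    unfold sigmaM at hσk1
    rwa [dif_pos hA] at hσk1
  have hpos_all : ∀ j, 1 ≤ j → j ≤ k → 0 < esymmVec n j x :=
    gamma_subset hk2 hkn hGamma
  have hpos : 0 < esymmVec n k x := hpos_all k (by omega) le_rfl
  obtain ⟨μ, hcard, hμpos, hid⟩ :=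
    master hk2 hkn x hpos fun j h1 h2 => (hpos_all j h1 h2).le
  have hDk := Df_pos n k k
  have hD0 := Df_pos n k 0
  have hD1 := Df_pos n k 1
  have hDk1 := Df_pos n k (k - 1)
  -- the product of the roots is at least `a`
  have hesk : μ.esymm k = μ.prod := by rw [← hcard, esymm_card]
  have hprod : a ≤ μ.prod := by
    have h := hid k le_rfl
    rw [Nat.sub_self, hesk] at h
    rw [ha, div_le_iff₀ hDk]
    nlinarith
  have haprod : 0 < a := div_pos (mul_pos hD0 hc₁) hDk
  -- `e_{k-1}` of the roots is at most `b`
  have hesk1 : μ.esymm (k - 1) ≤ b := by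
    have h := hid (k - 1) (by omega)
    have h' : k - (k - 1) = 1 := by omega
    rw [h'] at h
    rw [hb, le_div_iff₀ hDk]
    nlinarith
  have hbpos : 0 < b :=
    lt_of_lt_of_le (esymm_pos hμpos (by rw [hcard]; omega)) hesk1
  -- lower bound for each root
  have hlow : ∀ r ∈ μ, a / b ≤ r := by
    intro r hr
    have hrpos := hμpos r hr
    have hcons : r ::ₘ μ.erase r = μ := Multiset.cons_erase hr
    have herase_mem : μ.erase r ∈ Multiset.powersetCard (k - 1) μ :=
      Multiset.mem_powersetCard.mpr
        ⟨Multiset.erase_le r μ, by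
          rw [Multiset.card_erase_of_mem hr, hcard, Nat.pred_eq_sub_one]⟩
    have hle : (μ.erase r).prod ≤ b := le_trans (term_le_esymm hμpos herase_mem) hesk1
    have hppos : 0 < (μ.erase r).prod :=
      mprod_pos fun y hy => hμpos y (Multiset.mem_of_le (Multiset.erase_le r μ) hy)
    have hμprod : r * (μ.erase r).prod = μ.prod := by
      rw [← Multiset.prod_cons, hcons]
    rw [div_le_iff₀ hbpos]
    nlinarith
  have habpos : 0 < a / b := div_pos haprod hbpos
  -- upper bound for each root
  have hupp : ∀ r ∈ μ, r ≤ B := by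
    intro r hr
    have hrpos := hμpos r hr
    have hc1 : Multiset.card (μ.erase r) = k - 1 := by
      rw [Multiset.card_erase_of_mem hr, hcard, Nat.pred_eq_sub_one]
    have hne : μ.erase r ≠ 0 := by
      intro h; rw [h] at hc1; simp at hc1; omega
    obtain ⟨s0, hs0⟩ := Multiset.exists_mem_of_ne_zero hne
    set m := r ::ₘ ((μ.erase r).erase s0) with hm
    have hmle : m ≤ μ := by
      rw [hm]
      calc r ::ₘ ((μ.erase r).erase s0) ≤ r ::ₘ (μ.erase r) :=
            Multiset.cons_le_cons r (Multiset.erase_le s0 _)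
        _ = μ := Multiset.cons_erase hr
    have hmcard : Multiset.card m = k - 1 := by
      rw [hm, Multiset.card_cons, Multiset.card_erase_of_mem hs0, hc1,
        Nat.pred_eq_sub_one]
      omega
    have hmmem : m ∈ Multiset.powersetCard (k - 1) μ :=
      Multiset.mem_powersetCard.mpr ⟨hmle, hmcard⟩
    have hrest : (a / b) ^ (k - 2) ≤ ((μ.erase r).erase s0).prod := by
      have hcard2 : Multiset.card ((μ.erase r).erase s0) = k - 2 := by
        rw [Multiset.card_erase_of_mem hs0, hc1, Nat.pred_eq_sub_one]
        omega
      rw [← hcard2]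
      exact mprod_ge habpos fun y hy => hlow y
        (Multiset.mem_of_le (le_trans (Multiset.erase_le s0 _) (Multiset.erase_le r μ)) hy)
    have hmb : m.prod ≤ b := le_trans (term_le_esymm hμpos hmmem) hesk1
    have hmprod : m.prod = r * ((μ.erase r).erase s0).prod := by
      rw [hm, Multiset.prod_cons]
    rw [hB, le_div_iff₀ (pow_pos habpos _)]
    nlinarith
  -- the sum of the roots, hence `σ₁(x)`, is bounded
  have hsum : μ.sum ≤ k * B := by
    have h := Multiset.sum_le_card_nsmul μ B hupp
    rw [hcard, nsmul_eq_mul] at h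
    linarith
  have he1 : Df n k (k - 1) * esymmVec n 1 x = Df n k k * μ.sum := by
    have h := hid 1 (by omega)
    rwa [esymm_one] at h
  have he1pos : 0 < esymmVec n 1 x := hpos_all 1 le_rfl (by omega)
  have hsumnn : 0 ≤ μ.sum := by
    have : 0 < μ.sum := by
      have := esymm_pos hμpos (show 1 ≤ Multiset.card μ by rw [hcard]; omega)
      rwa [esymm_one] at this
    linarith
  have he1bound : esymmVec n 1 x ≤ Df n k k * (k * B) / Df n k (k - 1) := by
    rw [le_div_iff₀ hDk1]
    nlinarith
  -- `σ₂(x) ≥ 0` and the sum of squares bound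
  have he2 : 0 ≤ esymmVec n 2 x := (hpos_all 2 (by omega) hk2).le
  have hsq : (∑ j, x j) ^ 2 = ∑ j, x j ^ 2 + 2 * esymmVec n 2 x := by
    have := sq_sum_aux (Finset.univ : Finset (Fin n)) x
    rw [this]
    rfl
  have hxsq : x i ^ 2 ≤ esymmVec n 1 x ^ 2 := by
    have h1 : x i ^ 2 ≤ ∑ j, x j ^ 2 :=
      Finset.single_le_sum (fun j _ => sq_nonneg (x j)) (Finset.mem_univ i)
    rw [esymmVec_one]
    nlinarith
  have habs : |x i| ≤ esymmVec n 1 x := by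
    by_contra hcon
    push_neg at hcon
    have h2 : esymmVec n 1 x ^ 2 < |x i| ^ 2 :=
      pow_lt_pow_left₀ hcon he1pos.le (by norm_num)
    rw [sq_abs] at h2
    linarith
  exact le_trans habs he1bound
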